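/- Let f : F → C be a classifier on a finite product input space F = X_1 × ⋯ × X_n (each X_i a finite nonempty set, C a finite nonempty set of classes) and let D be an arbitrary distribution on F. Then the global sufficient value function v^g_suff is monotone non-decreasing: for all S ⊆ S' ⊆ {1,…,n}, v^g_suff(S) ≤ v^g_suff(S'). -/

import Mathlib

open Finset

open Classical in
/-- Conditional probability `Pr(A | B) = Pr(A ∩ B) / Pr(B)` over a finite space,
with mass function `P`. -/
noncomputable def condPr {F : Type*} [Fintype F] (P : F → ℝ) (A B : F → Prop) : ℝ :=
  (∑ z, if A z ∧ B z then P z else 0) / (∑ z, if B z then P z else 0)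

open Classical in
/-- The global sufficient value function
`v^g_suff(S) = Σ_{x : P x > 0} P x · Pr_{z∼D}(f z = f x | z_S = x_S)`. -/
noncomputable def vgSuff {n : ℕ} {X : Fin n → Type*} [∀ i, Fintype (X i)]
    {C : Type*} (f : (∀ i, X i) → C) (P : (∀ i, X i) → ℝ)
    (S : Finset (Fin n)) : ℝ :=
  ∑ x ∈ Finset.univ.filter (fun x => 0 < P x),
    P x * condPr P (fun z => f z = f x) (fun z => ∀ i ∈ S, z i = x i)

set_option linter.unusedSectionVars false
namespace VgAux

variable {n : ℕ} {X : Fin n → Type*} [∀ i, Fintype (X i)] {C : Type*} [Fintype C]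

open Classical

/-- restriction of a point to coordinates in `S` -/
noncomputable def gF (S : Finset (Fin n)) (x : ∀ i, X i) : ∀ i : S, X i := fun i => x i

noncomputable def MM (f : (∀ i, X i) → C) (P : (∀ i, X i) → ℝ) (S : Finset (Fin n))
    (b : ∀ i : S, X i) (c : C) : ℝ :=
  ∑ x, if f x = c ∧ gF S x = b then P x else 0

noncomputable def NN (P : (∀ i, X i) → ℝ) (S : Finset (Fin n)) (b : ∀ i : S, X i) : ℝ :=
  ∑ x, if gF S x = b then P x else 0

variable (f : (∀ i, X i) → C) (P : (∀ i, X i) → ℝ)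

lemma NN_nonneg (hP0 : ∀ x, 0 ≤ P x) (S : Finset (Fin n)) (b : ∀ i : S, X i) : 0 ≤ NN P S b :=
  Finset.sum_nonneg fun x _ => by split <;> [exact hP0 x; exact le_rfl]

lemma MM_nonneg (hP0 : ∀ x, 0 ≤ P x) (S : Finset (Fin n)) (b : ∀ i : S, X i) (c : C) : 0 ≤ MM f P S b c :=
  Finset.sum_nonneg fun x _ => by split <;> [exact hP0 x; exact le_rfl]

lemma MM_le_NN (hP0 : ∀ x, 0 ≤ P x) (S : Finset (Fin n)) (b : ∀ i : S, X i) (c : C) : MM f P S b c ≤ NN P S b := by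
  apply Finset.sum_le_sum
  intro x _
  split
  · rename_i h; rw [if_pos h.2]
  · split
    · exact hP0 x
    · exact le_rfl

lemma condPr_eq (S : Finset (Fin n)) (x : ∀ i, X i) :
    condPr P (fun z => f z = f x) (fun z => ∀ i ∈ S, z i = x i)
      = MM f P S (gF S x) (f x) / NN P S (gF S x) := by
  unfold condPr MM NN
  have key : ∀ z : ∀ i, X i, (∀ i ∈ S, z i = x i) ↔ gF S z = gF S x := by
    intro z; simp [gF, funext_iff, Subtype.forall]
  congr 1
  · refine Finset.sum_congr rfl fun z _ => ?_
    simp only [key]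
  · refine Finset.sum_congr rfl fun z _ => ?_
    simp only [key]

lemma vgSuff_eq (hP0 : ∀ x, 0 ≤ P x) (S : Finset (Fin n)) :
    vgSuff f P S = ∑ p : (∀ i : S, X i) × C, (MM f P S p.1 p.2) ^ 2 / NN P S p.1 := by
  have h1 : vgSuff f P S
      = ∑ x, P x * (MM f P S (gF S x) (f x) / NN P S (gF S x)) := by
    unfold vgSuff
    rw [Finset.sum_filter]
    refine Finset.sum_congr rfl fun x _ => ?_
    by_cases hx : 0 < P x
    · rw [if_pos hx, condPr_eq]
    · rw [if_neg hx]
      have : P x = 0 := le_antisymm (not_lt.mp hx) (hP0 x)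
      rw [this, zero_mul]
  rw [h1, ← Finset.sum_fiberwise (univ : Finset (∀ i, X i))
    (fun x => (gF S x, f x))
    (fun x => P x * (MM f P S (gF S x) (f x) / NN P S (gF S x)))]
  refine Finset.sum_congr rfl fun p _ => ?_
  have h2 : ∀ x ∈ univ.filter (fun x => (gF S x, f x) = p),
      P x * (MM f P S (gF S x) (f x) / NN P S (gF S x))
        = P x * (MM f P S p.1 p.2 / NN P S p.1) := by
    intro x hx
    rw [Finset.mem_filter] at hx
    rw [← hx.2]
  rw [Finset.sum_congr rfl h2, ← Finset.sum_mul]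
  have h3 : ∑ x ∈ univ.filter (fun x => (gF S x, f x) = p), P x = MM f P S p.1 p.2 := by
    rw [Finset.sum_filter]
    unfold MM
    refine Finset.sum_congr rfl fun x _ => ?_
    refine if_congr ?_ rfl rfl
    rw [Prod.ext_iff, and_comm]
  rw [h3, sq, mul_div_assoc]

noncomputable def res {S S' : Finset (Fin n)} (h : S ⊆ S') (b : ∀ i : S', X i) :
    ∀ i : S, X i := fun i => b ⟨i.1, h i.2⟩

lemma MM_refine {S S' : Finset (Fin n)} (h : S ⊆ S') (b : ∀ i : S, X i) (c : C) :
    MM f P S b c = ∑ b' ∈ univ.filter (fun b' => res (X := X) h b' = b), MM f P S' b' c := by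
  rw [Finset.sum_filter]
  unfold MM
  have push : ∀ a : ∀ i : S', X i,
      (if res (X := X) h a = b then ∑ x, (if f x = c ∧ gF S' x = a then P x else 0) else 0)
        = ∑ x, if res (X := X) h a = b then (if f x = c ∧ gF S' x = a then P x else 0) else 0 := by
    intro a; split <;> simp
  simp only [push]
  rw [Finset.sum_comm]
  refine Finset.sum_congr rfl fun x _ => ?_
  rw [Finset.sum_eq_single (gF S' x)]
  · have hres : res (X := X) h (gF S' x) = gF S x := rfl
    by_cases h2 : gF S x = b
    · rw [← h2, ← hres]; simp
    · rw [if_neg (fun hc => h2 hc.2)]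
      rw [hres]
      by_cases h3 : gF S x = b
      · exact absurd h3 h2
      · simp [h3]
  · intro b' _ hne
    split
    · exact if_neg (fun hc => hne hc.2.symm)
    · rfl
  · simp

lemma NN_refine {S S' : Finset (Fin n)} (h : S ⊆ S') (b : ∀ i : S, X i) :
    NN P S b = ∑ b' ∈ univ.filter (fun b' => res (X := X) h b' = b), NN P S' b' := by
  rw [Finset.sum_filter]
  unfold NN
  have push : ∀ a : ∀ i : S', X i,
      (if res (X := X) h a = b then ∑ x, (if gF S' x = a then P x else 0) else 0)
        = ∑ x, if res (X := X) h a = b then (if gF S' x = a then P x else 0) else 0 := by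
    intro a; split <;> simp
  simp only [push]
  rw [Finset.sum_comm]
  refine Finset.sum_congr rfl fun x _ => ?_
  rw [Finset.sum_eq_single (gF S' x)]
  · have hres : res (X := X) h (gF S' x) = gF S x := rfl
    by_cases h2 : gF S x = b
    · rw [← h2, ← hres]; simp
    · rw [hres, if_neg h2]
      simp [h2]
  · intro b' _ hne
    split
    · exact if_neg (fun hc => hne hc.symm)
    · rfl
  · simp

lemma cell_le (hP0 : ∀ x, 0 ≤ P x) {S S' : Finset (Fin n)} (h : S ⊆ S')
    (b : ∀ i : S, X i) (c : C) :
    MM f P S b c ^ 2 / NN P S b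
      ≤ ∑ b' ∈ univ.filter (fun b' => res (X := X) h b' = b),
          MM f P S' b' c ^ 2 / NN P S' b' := by
  classical
  set t := univ.filter (fun b' => res (X := X) h b' = b) with ht
  set t2 := t.filter (fun b' => 0 < NN P S' b') with ht2
  have hsub : t2 ⊆ t := Finset.filter_subset _ _
  have hzero : ∀ b' ∈ t, b' ∉ t2 → MM f P S' b' c = 0 ∧ NN P S' b' = 0 := by
    intro b' hb hb2
    have hnlt : ¬ 0 < NN P S' b' := by
      intro hc; exact hb2 (Finset.mem_filter.mpr ⟨hb, hc⟩)
    have hN : NN P S' b' = 0 := le_antisymm (not_lt.mp hnlt) (NN_nonneg P hP0 S' b')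
    refine ⟨le_antisymm (hN ▸ MM_le_NN f P hP0 S' b' c) (MM_nonneg f P hP0 S' b' c), hN⟩
  have hM : MM f P S b c = ∑ b' ∈ t2, MM f P S' b' c := by
    rw [MM_refine f P h b c]
    exact (Finset.sum_subset hsub fun b' hb hb2 => (hzero b' hb hb2).1).symm
  have hN : NN P S b = ∑ b' ∈ t2, NN P S' b' := by
    rw [NN_refine P h b]
    exact (Finset.sum_subset hsub fun b' hb hb2 => (hzero b' hb hb2).2).symm
  rw [hM, hN]
  calc (∑ b' ∈ t2, MM f P S' b' c) ^ 2 / ∑ b' ∈ t2, NN P S' b'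
      ≤ ∑ b' ∈ t2, MM f P S' b' c ^ 2 / NN P S' b' :=
        Finset.sq_sum_div_le_sum_sq_div t2 _ (fun b' hb => (Finset.mem_filter.mp hb).2)
    _ ≤ ∑ b' ∈ t, MM f P S' b' c ^ 2 / NN P S' b' :=
        Finset.sum_le_sum_of_subset_of_nonneg hsub
          (fun b' _ _ => div_nonneg (sq_nonneg _) (NN_nonneg P hP0 S' b'))

end VgAux

/-- for any classifier on a finite product input space and any
distribution, the global sufficient value function is monotone non-decreasing. -/
theorem vgSuff_monotone {n : ℕ} {X : Fin n → Type*} [∀ i, Fintype (X i)]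
    [∀ i, Nonempty (X i)] {C : Type*} [Fintype C] [Nonempty C]
    (f : (∀ i, X i) → C) (P : (∀ i, X i) → ℝ)
    (hP0 : ∀ x, 0 ≤ P x) (hP1 : ∑ x, P x = 1)
    (S S' : Finset (Fin n)) (hSS' : S ⊆ S') :
    vgSuff f P S ≤ vgSuff f P S' := by
  classical
  open VgAux in
  rw [vgSuff_eq f P hP0 S, vgSuff_eq f P hP0 S', Fintype.sum_prod_type, Fintype.sum_prod_type,
    ← Finset.sum_fiberwise (univ : Finset (∀ i : ↥S', X i)) (res (X := X) hSS')
      (fun b' => ∑ c, MM f P S' b' c ^ 2 / NN P S' b')]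
  refine Finset.sum_le_sum fun b _ => ?_
  rw [Finset.sum_comm]
  exact Finset.sum_le_sum fun c _ => cell_le f P hP0 hSS' b c
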